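/- (Theorem 2.4, Golumbic) Let A be an implication class of an undirected graph G = (V,E). Then exactly one of the following holds: (i) A = A⁻¹ = Â and Â admits no transitive orientation; (ii) A ∩ A⁻¹ = ∅, and both A and A⁻¹ are transitive orientations of Â. -/

import Mathlib

open Set

namespace TransOrient

variable {V : Type*}

/-- `E` is the edge set of an undirected graph on the vertex type `V`:
an irreflexive and symmetric relation, given as a set of ordered pairs. -/
def IsGraph (E : Set (V × V)) : Prop :=
  (∀ a : V, (a, a) ∉ E) ∧ (∀ a b : V, (a, b) ∈ E ↔ (b, a) ∈ E)

/-- The forcing relation `Γ` on directed edges: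
`(a,b) Γ (a',b')` iff (`a = a'` and `(b,b') ∉ E`) or (`b = b'` and `(a,a') ∉ E`). -/
def Gamma (E : Set (V × V)) (e e' : V × V) : Prop :=
  e ∈ E ∧ e' ∈ E ∧
    ((e.1 = e'.1 ∧ (e.2, e'.2) ∉ E) ∨ (e.2 = e'.2 ∧ (e.1, e'.1) ∉ E))

/-- The implication classes of `G = (V,E)`: equivalence classes on `E` of
the reflexive-transitive closure of `Γ`. -/
def IsImplicationClass (E : Set (V × V)) (A : Set (V × V)) : Prop :=
  ∃ e ∈ E, A = {e' | Relation.ReflTransGen (Gamma E) e e'}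

/-- `A⁻¹ = {(b,a) : (a,b) ∈ A}`. -/
def inv (A : Set (V × V)) : Set (V × V) := {p | (p.2, p.1) ∈ A}

/-- The color class `Â = A ∪ A⁻¹` of an implication class `A`. -/
def hat (A : Set (V × V)) : Set (V × V) := A ∪ inv A

/-- `Ã`: the set of vertices incident to an edge of `A`. -/
def tilde (A : Set (V × V)) : Set V := {v | ∃ w, (v, w) ∈ A ∨ (w, v) ∈ A}

/-- A transitive orientation `E'` of a symmetric edge set `F`:
`E' ⊆ F`, `E' ∩ E'⁻¹ = ∅`, `E' ∪ E'⁻¹ = F` and `E'` is transitive. -/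
def IsTransOrientation (F E' : Set (V × V)) : Prop :=
  E' ⊆ F ∧ E' ∩ inv E' = ∅ ∧ E' ∪ inv E' = F ∧
    ∀ a b c : V, (a, b) ∈ E' → (b, c) ∈ E' → (a, c) ∈ E'

/-- `G` is a comparability graph if `E` admits a transitive orientation. -/
def IsComparability (E : Set (V × V)) : Prop :=
  ∃ E' : Set (V × V), IsTransOrientation E E'

/-- `E(X)`: the set of edges of `E` with both endpoints in `X`. -/
def edgesOn (E : Set (V × V)) (X : Set V) : Set (V × V) :=
  {p ∈ E | p.1 ∈ X ∧ p.2 ∈ X}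

/-- `X` is a partitive set of `G = (V,E)`. -/
def IsPartitive (E : Set (V × V)) (X : Set V) : Prop :=
  ∀ a ∈ X, ∀ b ∈ X, ∀ c ∉ X, ((a, c) ∈ E ↔ (b, c) ∈ E)

/-- `X` is a "strong" partitive set of `G = (V,E)`. -/
def IsStrongPartitive (E : Set (V × V)) (X : Set V) : Prop :=
  IsPartitive E X ∧
    ∀ Y : Set V, IsPartitive E Y → (Y ∩ X).Nonempty → X ⊆ Y ∨ Y ⊆ X

/-- `X` is a maximal "strong" partitive set of `G = (V,E)`: a strong partitive
set different from `V` which is maximal, for inclusion, among the strong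
partitive sets different from `V`. -/
def IsMaxStrongPartitive (E : Set (V × V)) (X : Set V) : Prop :=
  IsStrongPartitive E X ∧ X ≠ Set.univ ∧
    ∀ Y : Set V, IsStrongPartitive E Y → Y ≠ Set.univ → X ⊆ Y → X = Y

/-- `X` is a partitive set of the induced subgraph `G(W) = (W, E(W))`. -/
def IsPartitiveIn (E : Set (V × V)) (W : Set V) (X : Set V) : Prop :=
  X ⊆ W ∧ ∀ a ∈ X, ∀ b ∈ X, ∀ c ∈ W \ X,
    ((a, c) ∈ edgesOn E W ↔ (b, c) ∈ edgesOn E W)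

/-- `X` is a "strong" partitive set of the induced subgraph `G(W)`. -/
def IsStrongPartitiveIn (E : Set (V × V)) (W : Set V) (X : Set V) : Prop :=
  IsPartitiveIn E W X ∧
    ∀ Y : Set V, IsPartitiveIn E W Y → (Y ∩ X).Nonempty → X ⊆ Y ∨ Y ⊆ X

/-- `X` is a maximal "strong" partitive set of the induced subgraph `G(W)`. -/
def IsMaxStrongPartitiveIn (E : Set (V × V)) (W : Set V) (X : Set V) : Prop :=
  IsStrongPartitiveIn E W X ∧ X ≠ W ∧
    ∀ Y : Set V, IsStrongPartitiveIn E W Y → Y ≠ W → X ⊆ Y → X = Y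

/-- Two directed edges lie in the same color class of `G = (V,E)`. -/
def SameColor (E : Set (V × V)) (e e' : V × V) : Prop :=
  ∃ A : Set (V × V), IsImplicationClass E A ∧ e ∈ hat A ∧ e' ∈ hat A

/-- A simplex of `G = (V,E)` given by its (finite, nonempty) vertex set `VS`:
a complete induced subgraph whose edges, for distinct unordered pairs,
lie in distinct color classes of `G`. -/
def IsSimplex (E : Set (V × V)) (VS : Set V) : Prop :=
  VS.Finite ∧ VS.Nonempty ∧
    (∀ a ∈ VS, ∀ b ∈ VS, a ≠ b → (a, b) ∈ E) ∧
    (∀ a ∈ VS, ∀ b ∈ VS, ∀ c ∈ VS, ∀ d ∈ VS, a ≠ b → c ≠ d →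
      SameColor E (a, b) (c, d) → (a = c ∧ b = d) ∨ (a = d ∧ b = c))

/-- The rank of a simplex on `r+1` vertices is `r`. -/
noncomputable def simplexRank (VS : Set V) : ℕ := VS.ncard - 1

/-- A maximal simplex: its vertex set is not properly contained in the
vertex set of another simplex. -/
def IsMaxSimplex (E : Set (V × V)) (VS : Set V) : Prop :=
  IsSimplex E VS ∧ ∀ VS' : Set V, IsSimplex E VS' → VS ⊆ VS' → VS = VS'

/-- The multiplex `M(S)` generated by a simplex with vertex set `VS`:
the union of all color classes of `G` containing an edge of the simplex. -/
def multiplex (E : Set (V × V)) (VS : Set V) : Set (V × V) :=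
  {e | ∃ A : Set (V × V), IsImplicationClass E A ∧ e ∈ hat A ∧
    ∃ a ∈ VS, ∃ b ∈ VS, a ≠ b ∧ (a, b) ∈ hat A}

/-- A maximal multiplex of `G`: a multiplex generated by a maximal simplex. -/
def IsMaxMultiplex (E : Set (V × V)) (M : Set (V × V)) : Prop :=
  ∃ VS : Set V, IsMaxSimplex E VS ∧ M = multiplex E VS

/-- `P` is a partition of the set `W`. -/
def IsPartitionOf (W : Set V) (P : Set (Set V)) : Prop :=
  (∀ X ∈ P, X.Nonempty) ∧ ⋃₀ P = W ∧
    ∀ X ∈ P, ∀ Y ∈ P, X ≠ Y → X ∩ Y = ∅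

/-- Adjacency in the quotient of the induced subgraph `G(W)` by a partition:
two distinct blocks are adjacent iff some pair of representatives is an
edge of `E(W)`. -/
def quotAdj (E : Set (V × V)) (W : Set V) (X Y : Set V) : Prop :=
  X ≠ Y ∧ ∃ x ∈ X, ∃ y ∈ Y, (x, y) ∈ edgesOn E W

/-- A partitive set of an abstract graph with vertex set `W` and adjacency
relation `Adj`. -/
def IsPartitiveGen {α : Type*} (W : Set α) (Adj : α → α → Prop) (X : Set α) : Prop :=
  X ⊆ W ∧ ∀ a ∈ X, ∀ b ∈ X, ∀ c ∈ W \ X, (Adj a c ↔ Adj b c)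

/-- An abstract graph `(W, Adj)` is indecomposable if all its partitive
sets are trivial. -/
def IndecomposableGen {α : Type*} (W : Set α) (Adj : α → α → Prop) : Prop :=
  ∀ X : Set α, IsPartitiveGen W Adj X → X.Subsingleton ∨ X = W

/-- An isomorphism between the graphs `(Vα, Aα)` and `(Vβ, Aβ)`:
a bijection of the vertex sets preserving adjacency in both directions. -/
def GraphIso {α β : Type*} (Vα : Set α) (Aα : α → α → Prop)
    (Vβ : Set β) (Aβ : β → β → Prop) : Prop :=
  ∃ f : α → β, Set.BijOn f Vα Vβ ∧
    ∀ a ∈ Vα, ∀ b ∈ Vα, (Aα a b ↔ Aβ (f a) (f b))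

/-- `(V', E')` is a subgraph of the induced subgraph `G(W)` of `G = (V,E)`. -/
def IsSubgraphOf (E : Set (V × V)) (W : Set V) (V' : Set V) (E' : Set (V × V)) : Prop :=
  V' ⊆ W ∧ E' ⊆ edgesOn E W ∧ (∀ e ∈ E', e.1 ∈ V' ∧ e.2 ∈ V') ∧
    (∀ a b : V, (a, b) ∈ E' ↔ (b, a) ∈ E')

section GolumbicAux

variable {V : Type*} {E : Set (V × V)}

lemma gamma_symm (hG : IsGraph E) : Symmetric (Gamma E) := by
  rintro ⟨a, b⟩ ⟨c, d⟩ ⟨h1, h2, h3 | h3⟩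
  · exact ⟨h2, h1, Or.inl ⟨h3.1.symm, fun h => h3.2 ((hG.2 _ _).mp h)⟩⟩
  · exact ⟨h2, h1, Or.inr ⟨h3.1.symm, fun h => h3.2 ((hG.2 _ _).mp h)⟩⟩

lemma rtg_mem_E {e e' : V × V} (h : Relation.ReflTransGen (Gamma E) e e')
    (he : e ∈ E) : e' ∈ E := by
  induction h with
  | refl => exact he
  | tail _ hstep _ => exact hstep.2.1

lemma gamma_swap (hG : IsGraph E) {e e' : V × V} (h : Gamma E e e') :
    Gamma E e.swap e'.swap := by
  obtain ⟨a, b⟩ := e; obtain ⟨c, d⟩ := e'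
  obtain ⟨h1, h2, h3 | h3⟩ := h
  · exact ⟨(hG.2 _ _).mp h1, (hG.2 _ _).mp h2, Or.inr ⟨h3.1, h3.2⟩⟩
  · exact ⟨(hG.2 _ _).mp h1, (hG.2 _ _).mp h2, Or.inl ⟨h3.1, h3.2⟩⟩

lemma rtg_swap (hG : IsGraph E) {e e' : V × V}
    (h : Relation.ReflTransGen (Gamma E) e e') :
    Relation.ReflTransGen (Gamma E) e.swap e'.swap := by
  induction h with
  | refl => exact Relation.ReflTransGen.refl
  | tail _ hstep ih => exact ih.tail (gamma_swap hG hstep)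

/-- Two implication classes with a common element coincide. -/
lemma class_eq_of_mem (hG : IsGraph E) {e₀ e₁ x : V × V}
    (h0 : Relation.ReflTransGen (Gamma E) e₀ x)
    (h1 : Relation.ReflTransGen (Gamma E) e₁ x) :
    {e' | Relation.ReflTransGen (Gamma E) e₀ e'} =
      {e' | Relation.ReflTransGen (Gamma E) e₁ e'} := by
  have hs : Symmetric (Relation.ReflTransGen (Gamma E)) := fun x y h => (@Relation.ReflTransGen.stdSymm _ _ ⟨gamma_symm hG⟩).symm x y h
  ext y
  exact ⟨fun hy => (h1.trans (hs h0)).trans hy,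
    fun hy => (h0.trans (hs h1)).trans hy⟩

/-- The key transitivity argument (Golumbic, Theorem 2.1 via the
Triangle Lemma): if an implication class is disjoint from its inverse,
it is transitive. -/
lemma class_trans (hG : IsGraph E) {e₀ : V × V} (he₀ : e₀ ∈ E)
    (hd : ∀ x y : V, Relation.ReflTransGen (Gamma E) e₀ (x, y) →
      ¬ Relation.ReflTransGen (Gamma E) e₀ (y, x))
    {a b c : V} (hab : Relation.ReflTransGen (Gamma E) e₀ (a, b))
    (hbc : Relation.ReflTransGen (Gamma E) e₀ (b, c)) :
    Relation.ReflTransGen (Gamma E) e₀ (a, c) := by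
  have hs : Symmetric (Relation.ReflTransGen (Gamma E)) := fun x y h => (@Relation.ReflTransGen.stdSymm _ _ ⟨gamma_symm hG⟩).symm x y h
  have memE : ∀ {p : V × V}, Relation.ReflTransGen (Gamma E) e₀ p → p ∈ E :=
    fun hp => rtg_mem_E hp he₀
  have habE : (a, b) ∈ E := memE hab
  have hbcE : (b, c) ∈ E := memE hbc
  -- `a ≠ c`
  have hac_ne : a ≠ c := by
    intro h; subst h; exact hd a b hab hbc
  -- `(a,c) ∈ E`
  have hacE : (a, c) ∈ E := by
    by_contra hn
    have hg : Gamma E (a, b) (c, b) :=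
      ⟨habE, (hG.2 _ _).mp hbcE, Or.inr ⟨rfl, hn⟩⟩
    exact hd b c hbc (hab.tail hg)
  -- assume `(a,c) ∉ A` and derive a contradiction
  by_contra hnac
  -- triangle induction along the chain from (b,c) inside A
  have key : ∀ p : V × V, Relation.ReflTransGen (Gamma E) (b, c) p →
      Relation.ReflTransGen (Gamma E) e₀ (a, p.1) ∧
        Relation.ReflTransGen (Gamma E) (a, c) (a, p.2) := by
    intro p hp
    induction hp with
    | refl => exact ⟨hab, Relation.ReflTransGen.refl⟩
    | @tail p' p'' hp' hstep ih =>
      obtain ⟨b', c'⟩ := p'; obtain ⟨b'', c''⟩ := p''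
      have hp'A : Relation.ReflTransGen (Gamma E) e₀ (b', c') := hbc.trans hp'
      have hp''A : Relation.ReflTransGen (Gamma E) e₀ (b'', c'') :=
        hp'A.tail hstep
      have hp''E : (b'', c'') ∈ E := memE hp''A
      have hab'E : (a, b') ∈ E := memE ih.1
      have hac'E : (a, c') ∈ E := rtg_mem_E ih.2 hacE
      obtain ⟨_, _, ⟨hbeq, hcc⟩ | ⟨hceq, hbb⟩⟩ := hstep
      · -- b' = b'', (c', c'') ∉ E
        simp only at hbeq hcc
        subst hbeq
        have hE2 : (a, c'') ∈ E := by
          by_contra hn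
          have hg : Gamma E (a, b') (c'', b') :=
            ⟨hab'E, (hG.2 _ _).mp hp''E, Or.inr ⟨rfl, hn⟩⟩
          exact hd b' c'' hp''A (ih.1.tail hg)
        have hg2 : Gamma E (a, c') (a, c'') := ⟨hac'E, hE2, Or.inl ⟨rfl, hcc⟩⟩
        exact ⟨ih.1, ih.2.tail hg2⟩
      · -- c' = c'', (b', b'') ∉ E
        simp only at hceq hbb
        subst hceq
        have hE2 : (a, b'') ∈ E := by
          by_contra hn
          have hg : Gamma E (a, c') (b'', c') :=
            ⟨hac'E, hp''E, Or.inr ⟨rfl, hn⟩⟩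
          have hB : Relation.ReflTransGen (Gamma E) (a, c) (b'', c') :=
            ih.2.tail hg
          have heq := class_eq_of_mem hG hp''A hB
          have : (a, c) ∈ {e' | Relation.ReflTransGen (Gamma E) e₀ e'} := by
            rw [heq]; exact Relation.ReflTransGen.refl
          exact hnac this
        have hg2 : Gamma E (a, b') (a, b'') := ⟨hab'E, hE2, Or.inl ⟨rfl, hbb⟩⟩
        exact ⟨ih.1.tail hg2, ih.2⟩
  have hchain : Relation.ReflTransGen (Gamma E) (b, c) (a, b) :=
    (hs hbc).trans hab
  have := (key (a, b) hchain).1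
  exact hG.1 a (memE this)

end GolumbicAux

end TransOrient
open TransOrient in
/-- **(Theorem 2.4, Golumbic)** Exactly one of the two alternatives holds for an
implication class `A`: either `A = A⁻¹ = Â` and `Â` admits no transitive
orientation, or `A ∩ A⁻¹ = ∅` and `A`, `A⁻¹` are transitive orientations of `Â`. -/
theorem golumbic_implication_class_dichotomy
    {V : Type*} (E : Set (V × V)) (hG : IsGraph E)
    (A : Set (V × V)) (hA : IsImplicationClass E A) :
    Xor'
      (A = inv A ∧ A = hat A ∧ ¬ ∃ E' : Set (V × V), IsTransOrientation (hat A) E')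
      (A ∩ inv A = ∅ ∧ IsTransOrientation (hat A) A ∧ IsTransOrientation (hat A) (inv A)) := by
  obtain ⟨e₀, he₀, hAeq⟩ := hA
  have hs : Symmetric (Relation.ReflTransGen (Gamma E)) := fun x y h => (@Relation.ReflTransGen.stdSymm _ _ ⟨gamma_symm hG⟩).symm x y h
  have he₀A : e₀ ∈ A := by rw [hAeq]; exact Relation.ReflTransGen.refl
  have hAE : A ⊆ E := by
    intro p hp; rw [hAeq] at hp; exact rtg_mem_E hp he₀
  rcases Set.eq_empty_or_nonempty (A ∩ inv A) with hc | hc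
  · -- case (ii): A ∩ A⁻¹ = ∅
    have hd : ∀ x y : V, Relation.ReflTransGen (Gamma E) e₀ (x, y) →
        ¬ Relation.ReflTransGen (Gamma E) e₀ (y, x) := by
      intro x y hx hy
      have : (x, y) ∈ A ∩ inv A := ⟨by rw [hAeq]; exact hx, by rw [hAeq]; exact hy⟩
      rw [hc] at this; exact this
    have htrA : ∀ a b c : V, (a, b) ∈ A → (b, c) ∈ A → (a, c) ∈ A := by
      intro a b c h1 h2
      rw [hAeq] at h1 h2 ⊢
      exact class_trans hG he₀ hd h1 h2
    have hinvinv : inv (inv A) = A := rfl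
    have hOA : IsTransOrientation (hat A) A :=
      ⟨Set.subset_union_left, hc, rfl, htrA⟩
    have hOAinv : IsTransOrientation (hat A) (inv A) := by
      refine ⟨Set.subset_union_right, ?_, ?_, ?_⟩
      · rw [hinvinv, Set.inter_comm]; exact hc
      · rw [hinvinv, Set.union_comm]; rfl
      · intro a b c h1 h2
        exact htrA c b a h2 h1
    refine Or.inr ⟨⟨hc, hOA, hOAinv⟩, ?_⟩
    rintro ⟨hAinv, -, -⟩
    have : e₀ ∈ A ∩ inv A := ⟨he₀A, by rw [← hAinv]; exact he₀A⟩
    rw [hc] at this; exact this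
  · -- case (i): A ∩ A⁻¹ ≠ ∅
    obtain ⟨⟨x, y⟩, hx, hy⟩ := hc
    rw [hAeq] at hx
    have hy' : Relation.ReflTransGen (Gamma E) e₀ (y, x) := by
      have : (y, x) ∈ A := hy
      rwa [hAeq] at this
    -- A = A⁻¹
    have hAsym : ∀ p : V × V, p ∈ A → p.swap ∈ A := by
      rintro ⟨u, v⟩ hu
      rw [hAeq] at hu ⊢
      have h1 : Relation.ReflTransGen (Gamma E) (x, y) (u, v) := (hs hx).trans hu
      have h2 : Relation.ReflTransGen (Gamma E) (y, x) (v, u) := rtg_swap hG h1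
      exact hy'.trans h2
    have hAinv : A = inv A := by
      ext ⟨u, v⟩
      exact ⟨fun h => hAsym _ h, fun h => hAsym (v, u) h⟩
    have hhat : A = hat A := by
      rw [hat, ← hAinv, Set.union_self]
    have hhatE : hat A ⊆ E := by rw [← hhat]; exact hAE
    refine Or.inl ⟨⟨hAinv, hhat, ?_⟩, ?_⟩
    · rintro ⟨E', hsub, hdisj, hcover, htr⟩
      -- find a starting edge of A inside E'
      have hf₀ : ∃ f₀ ∈ A, f₀ ∈ E' := by
        have : e₀ ∈ E' ∪ inv E' := by rw [hcover, ← hhat]; exact he₀A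
        rcases this with h | h
        · exact ⟨e₀, he₀A, h⟩
        · exact ⟨e₀.swap, hAsym e₀ he₀A, h⟩
      obtain ⟨f₀, hf₀A, hf₀E'⟩ := hf₀
      -- every edge Γ-reachable from f₀ is in E'
      have key : ∀ p : V × V, Relation.ReflTransGen (Gamma E) f₀ p → p ∈ E' := by
        intro p hp
        induction hp with
        | refl => exact hf₀E'
        | @tail p' p'' hp' hstep ih =>
          have hp''A : p'' ∈ A := by
            rw [hAeq] at hf₀A ⊢
            exact (hf₀A.trans hp').tail hstep
          have : p'' ∈ E' ∪ inv E' := by rw [hcover, ← hhat]; exact hp''A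
          rcases this with h | h
          · exact h
          · exfalso
            obtain ⟨u, v⟩ := p'; obtain ⟨u', v'⟩ := p''
            obtain ⟨hp'E, hp''E, ⟨heq, hne⟩ | ⟨heq, hne⟩⟩ := hstep
            · simp only at heq hne; subst heq
              -- (v', u) ∈ E', (u, v) ∈ E' ⟹ (v', v) ∈ E ; but (v,v') ∉ E
              have h1 : (v', u) ∈ E' := h
              have h2 : (v', v) ∈ E' := htr _ _ _ h1 ih
              exact hne ((hG.2 _ _).mp (hhatE (hsub h2)))
            · simp only at heq hne; subst heq
              -- (v, u') ∈ E', (u, v) ∈ E' ⟹ (u, u') ∈ E ; but (u,u') ∉ E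
              have h1 : (v, u') ∈ E' := h
              have h2 : (u, u') ∈ E' := htr _ _ _ ih h1
              exact hne (hhatE (hsub h2))
      -- A ⊆ E' and A ⊆ inv E', contradiction
      have hAsubE' : A ⊆ E' := by
        intro p hp
        apply key
        rw [hAeq] at hp hf₀A
        exact (hs hf₀A).trans hp
      have : f₀ ∈ E' ∩ inv E' :=
        ⟨hf₀E', hAsubE' (hAsym f₀ hf₀A)⟩
      rw [hdisj] at this; exact this
    · rintro ⟨hEmpty, -, -⟩
      have : e₀ ∈ A ∩ inv A := ⟨he₀A, by rw [← hAinv]; exact he₀A⟩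
      rw [hEmpty] at this; exact this
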